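/- arXiv:1309.1222 — 4 statements merged into one kernel-verified Lean document; each statement's English description precedes it below -/
import Mathlib

section
/- Let g₁₁, g₂₂ > 0, g₁₂ > √(g₁₁g₂₂), μ > 0, a = √μ/g₁₁^{1/4}, b = √μ/g₂₂^{1/4}. If (u₁,u₂) is a C² solution on ℝ of −u₁'' + g₁₁(u₁² − a²)u₁ + g₁₂u₁u₂² = 0, −u₂'' + g₂₂(u₂² − b²)u₂ + g₁₂u₁²u₂ = 0 with u₁', u₂' ∈ L²(ℝ) and boundary conditions (u₁,u₂) → (a,0) as x → +∞, (u₁,u₂) → (0,b) as x → −∞, then u₁(x)²/a² + u₂(x)²/b² ≤ 1 for all x ∈ ℝ. -/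
open Filter MeasureTheory Set

theorem deriv2_nonpos_of_max (f : ℝ → ℝ) (hf : ContDiff ℝ 2 f) (x : ℝ)
    (hmax : ∀ y, f y ≤ f x) : deriv (deriv f) x ≤ 0 := by
  by_contra h
  push_neg at h
  have hf2' : ContDiff ℝ ((1 : ℕ) + 1) f := by exact_mod_cast hf
  have hder : ContDiff ℝ 1 (deriv f) := (contDiff_succ_iff_deriv.mp hf2').2.2
  have hdiff : Differentiable ℝ f := (contDiff_succ_iff_deriv.mp hf2').1
  have hg : HasDerivAt (deriv f) (deriv (deriv f) x) x :=
    ((hder.differentiable one_ne_zero) x).hasDerivAt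
  have hfx : deriv f x = 0 := by
    have : IsLocalMax f x := Filter.Eventually.of_forall hmax
    exact this.deriv_eq_zero
  have hslope := hasDerivAt_iff_tendsto_slope.mp hg
  have hev : ∀ᶠ y in nhdsWithin x (Ioi x), 0 < slope (deriv f) x y :=
    (hslope.mono_left (nhdsWithin_mono x fun y hy => ne_of_gt hy)).eventually
      (eventually_gt_nhds h)
  have hev' : ∀ᶠ y in nhdsWithin x (Ioi x), 0 < deriv f y := by
    filter_upwards [hev, self_mem_nhdsWithin] with y hy hy'
    rw [slope_def_field, hfx, sub_zero] at hy
    have hxy : 0 < y - x := sub_pos.mpr hy'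
    have := mul_pos hy hxy
    rw [div_mul_cancel₀] at this
    · exact this
    · exact ne_of_gt hxy
  obtain ⟨u, hu, hsub⟩ := mem_nhdsGT_iff_exists_Ioo_subset.mp hev'
  have hxu : x < u := hu
  have hmono : StrictMonoOn f (Icc x u) := by
    apply strictMonoOn_of_deriv_pos (convex_Icc x u) (hdiff.continuous.continuousOn)
    intro y hy
    rw [interior_Icc] at hy
    exact hsub hy
  have : f x < f u := hmono (left_mem_Icc.mpr hxu.le) (right_mem_Icc.mpr hxu.le) hxu
  exact absurd (hmax u) (not_le.mpr this)


theorem gp_final_contradiction (g₁₁ g₂₂ g₁₂ μ a b s₁ s₂ A B A' B' : ℝ)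
    (hs₁ : 0 < s₁) (hs₂ : 0 < s₂) (hμ : 0 < μ)
    (hs₁sq : s₁ ^ 2 = g₁₁) (hs₂sq : s₂ ^ 2 = g₂₂)
    (hga : g₁₁ * a ^ 2 = s₁ * μ) (hgb : g₂₂ * b ^ 2 = s₂ * μ)
    (hg12 : s₁ * s₂ ≤ g₁₂)
    (hφ : 0 < s₁ * A ^ 2 + s₂ * B ^ 2 - μ)
    (hsec : 2 * s₁ * (A' * A' + A * (g₁₁ * (A ^ 2 - a ^ 2) * A + g₁₂ * A * B ^ 2))
      + 2 * s₂ * (B' * B' + B * (g₂₂ * (B ^ 2 - b ^ 2) * B + g₁₂ * A ^ 2 * B)) ≤ 0) :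
    False := by
  have hc : 0 < g₁₁ * A ^ 2 + g₂₂ * B ^ 2 := by
    have h1 : 0 < A ^ 2 + B ^ 2 := by nlinarith [sq_nonneg A, sq_nonneg B, mul_pos hs₁ hs₂]
    have hg₁₁p : 0 < g₁₁ := by nlinarith
    have hg₂₂p : 0 < g₂₂ := by nlinarith
    rcases lt_or_ge 0 (A ^ 2) with h | h
    · nlinarith [mul_pos hg₁₁p h, mul_nonneg hg₂₂p.le (sq_nonneg B)]
    · have hA2 : A ^ 2 = 0 := le_antisymm h (sq_nonneg A)
      have hB2 : 0 < B ^ 2 := by linarith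
      nlinarith [mul_pos hg₂₂p hB2, mul_nonneg hg₁₁p.le (sq_nonneg A)]
  have hcφ : 0 < (g₁₁ * A ^ 2 + g₂₂ * B ^ 2) * (s₁ * A ^ 2 + s₂ * B ^ 2 - μ) :=
    mul_pos hc hφ
  have key : 2 * s₁ * (A' * A' + A * (g₁₁ * (A ^ 2 - a ^ 2) * A + g₁₂ * A * B ^ 2))
      + 2 * s₂ * (B' * B' + B * (g₂₂ * (B ^ 2 - b ^ 2) * B + g₁₂ * A ^ 2 * B))
      = 2 * s₁ * A' ^ 2 + 2 * s₂ * B' ^ 2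
      + 2 * ((g₁₁ * A ^ 2 + g₂₂ * B ^ 2) * (s₁ * A ^ 2 + s₂ * B ^ 2 - μ)
        + (g₁₂ - s₁ * s₂) * (s₁ + s₂) * A ^ 2 * B ^ 2) := by
    linear_combination (-2 * s₁ * A ^ 2) * hga + (-2 * s₂ * B ^ 2) * hgb
      + (2 * s₂ * A ^ 2 * B ^ 2 - 2 * μ * A ^ 2) * hs₁sq
      + (2 * s₁ * A ^ 2 * B ^ 2 - 2 * μ * B ^ 2) * hs₂sq
  rw [key] at hsec
  have hterm : 0 ≤ (g₁₂ - s₁ * s₂) * (s₁ + s₂) * A ^ 2 * B ^ 2 :=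
    mul_nonneg (mul_nonneg (mul_nonneg (sub_nonneg.mpr hg12)
      (by positivity)) (sq_nonneg A)) (sq_nonneg B)
  nlinarith [mul_nonneg hs₁.le (sq_nonneg A'), mul_nonneg hs₂.le (sq_nonneg B')]

set_option maxHeartbeats 1000000 in
theorem pointwise_ellipse_bound
    (g₁₁ g₂₂ g₁₂ μ a b : ℝ)
    (hg₁₁ : 0 < g₁₁) (hg₂₂ : 0 < g₂₂)
    (hg₁₂ : Real.sqrt (g₁₁ * g₂₂) < g₁₂) (hμ : 0 < μ)
    (ha : a = Real.sqrt μ / g₁₁ ^ ((1:ℝ)/4))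
    (hb : b = Real.sqrt μ / g₂₂ ^ ((1:ℝ)/4))
    (u₁ u₂ : ℝ → ℝ)
    (hu₁ : ContDiff ℝ 2 u₁) (hu₂ : ContDiff ℝ 2 u₂)
    (heq₁ : ∀ x, -(deriv (deriv u₁) x) + g₁₁ * (u₁ x ^ 2 - a^2) * u₁ x
      + g₁₂ * u₁ x * u₂ x ^ 2 = 0)
    (heq₂ : ∀ x, -(deriv (deriv u₂) x) + g₂₂ * (u₂ x ^ 2 - b^2) * u₂ x
      + g₁₂ * u₁ x ^ 2 * u₂ x = 0)
    (hL₁ : MemLp (deriv u₁) 2 volume)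
    (hL₂ : MemLp (deriv u₂) 2 volume)
    (hplus : Tendsto (fun x => (u₁ x, u₂ x)) atTop (nhds (a, 0)))
    (hminus : Tendsto (fun x => (u₁ x, u₂ x)) atBot (nhds (0, b))) :
    ∀ x : ℝ, u₁ x ^ 2 / a^2 + u₂ x ^ 2 / b^2 ≤ 1 := by
  set s₁ := Real.sqrt g₁₁ with hs₁def
  set s₂ := Real.sqrt g₂₂ with hs₂def
  have hs₁ : 0 < s₁ := Real.sqrt_pos.mpr hg₁₁
  have hs₂ : 0 < s₂ := Real.sqrt_pos.mpr hg₂₂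
  have hs₁sq : s₁ ^ 2 = g₁₁ := Real.sq_sqrt hg₁₁.le
  have hs₂sq : s₂ ^ 2 = g₂₂ := Real.sq_sqrt hg₂₂.le
  have hq₁ : (g₁₁ ^ ((1:ℝ)/4)) ^ 2 = s₁ := by
    rw [← Real.rpow_natCast (g₁₁ ^ ((1:ℝ)/4)) 2, ← Real.rpow_mul hg₁₁.le]
    norm_num [hs₁def, Real.sqrt_eq_rpow]
  have hq₂ : (g₂₂ ^ ((1:ℝ)/4)) ^ 2 = s₂ := by
    rw [← Real.rpow_natCast (g₂₂ ^ ((1:ℝ)/4)) 2, ← Real.rpow_mul hg₂₂.le]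
    norm_num [hs₂def, Real.sqrt_eq_rpow]
  have ha2 : a ^ 2 = μ / s₁ := by rw [ha, div_pow, Real.sq_sqrt hμ.le, hq₁]
  have hb2 : b ^ 2 = μ / s₂ := by rw [hb, div_pow, Real.sq_sqrt hμ.le, hq₂]
  have hga : g₁₁ * a ^ 2 = s₁ * μ := by
    rw [ha2, ← hs₁sq]; field_simp
  have hgb : g₂₂ * b ^ 2 = s₂ * μ := by
    rw [hb2, ← hs₂sq]; field_simp
  have hg12 : s₁ * s₂ < g₁₂ := by
    rwa [Real.sqrt_mul hg₁₁.le] at hg₁₂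
  set φ : ℝ → ℝ := fun x => s₁ * u₁ x ^ 2 + s₂ * u₂ x ^ 2 - μ with hφdef
  have hφCD : ContDiff ℝ 2 φ :=
    ((contDiff_const.mul (hu₁.pow 2)).add (contDiff_const.mul (hu₂.pow 2))).sub contDiff_const
  -- derivatives
  have hu₁2' : ContDiff ℝ ((1 : ℕ) + 1) u₁ := by exact_mod_cast hu₁
  have hu₂2' : ContDiff ℝ ((1 : ℕ) + 1) u₂ := by exact_mod_cast hu₂
  have hder₁ : ContDiff ℝ 1 (deriv u₁) := (contDiff_succ_iff_deriv.mp hu₁2').2.2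
  have hder₂ : ContDiff ℝ 1 (deriv u₂) := (contDiff_succ_iff_deriv.mp hu₂2').2.2
  have hd₁ : ∀ x, HasDerivAt u₁ (deriv u₁ x) x := fun x =>
    ((contDiff_succ_iff_deriv.mp hu₁2').1 x).hasDerivAt
  have hd₂ : ∀ x, HasDerivAt u₂ (deriv u₂ x) x := fun x =>
    ((contDiff_succ_iff_deriv.mp hu₂2').1 x).hasDerivAt
  have hd₁' : ∀ x, HasDerivAt (deriv u₁) (deriv (deriv u₁) x) x := fun x =>
    ((hder₁.differentiable one_ne_zero) x).hasDerivAt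
  have hd₂' : ∀ x, HasDerivAt (deriv u₂) (deriv (deriv u₂) x) x := fun x =>
    ((hder₂.differentiable one_ne_zero) x).hasDerivAt
  have hφd : ∀ x, HasDerivAt φ
      (s₁ * (2 * u₁ x * deriv u₁ x) + s₂ * (2 * u₂ x * deriv u₂ x)) x := by
    intro x
    have h1 : HasDerivAt (fun y => u₁ y ^ 2) (2 * u₁ x * deriv u₁ x) x := by
      simpa using (hd₁ x).fun_pow 2
    have h2 : HasDerivAt (fun y => u₂ y ^ 2) (2 * u₂ x * deriv u₂ x) x := by
      simpa using (hd₂ x).fun_pow 2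
    exact ((h1.const_mul s₁).add (h2.const_mul s₂)).sub_const μ
  have hψ : deriv φ = fun x => 2 * s₁ * (u₁ x * deriv u₁ x) + 2 * s₂ * (u₂ x * deriv u₂ x) :=
    funext fun x => ((hφd x).deriv).trans (by ring)
  have hD2 : ∀ x, deriv (deriv φ) x =
      2 * s₁ * (deriv u₁ x * deriv u₁ x + u₁ x * deriv (deriv u₁) x)
      + 2 * s₂ * (deriv u₂ x * deriv u₂ x + u₂ x * deriv (deriv u₂) x) := by
    intro x
    rw [hψ]
    exact ((((hd₁ x).mul (hd₁' x)).const_mul (2 * s₁)).add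
      (((hd₂ x).mul (hd₂' x)).const_mul (2 * s₂))).deriv
  -- limits
  have hu₁top : Tendsto u₁ atTop (nhds a) := (continuous_fst.tendsto (a, 0)).comp hplus
  have hu₂top : Tendsto u₂ atTop (nhds 0) := (continuous_snd.tendsto (a, 0)).comp hplus
  have hu₁bot : Tendsto u₁ atBot (nhds 0) := (continuous_fst.tendsto (0, b)).comp hminus
  have hu₂bot : Tendsto u₂ atBot (nhds b) := (continuous_snd.tendsto (0, b)).comp hminus
  have hsa : s₁ * a ^ 2 = μ := by rw [ha2]; field_simp
  have hsb : s₂ * b ^ 2 = μ := by rw [hb2]; field_simp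
  have hφtop : Tendsto φ atTop (nhds 0) := by
    have : Tendsto φ atTop (nhds (s₁ * a ^ 2 + s₂ * 0 ^ 2 - μ)) :=
      ((tendsto_const_nhds.mul (hu₁top.pow 2)).add
        (tendsto_const_nhds.mul (hu₂top.pow 2))).sub tendsto_const_nhds
    simpa [hsa] using this
  have hφbot : Tendsto φ atBot (nhds 0) := by
    have : Tendsto φ atBot (nhds (s₁ * 0 ^ 2 + s₂ * b ^ 2 - μ)) :=
      ((tendsto_const_nhds.mul (hu₁bot.pow 2)).add
        (tendsto_const_nhds.mul (hu₂bot.pow 2))).sub tendsto_const_nhds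
    simpa [hsb] using this
  have hco : Tendsto φ (cocompact ℝ) (nhds 0) := by
    rw [cocompact_eq_atBot_atTop]
    exact tendsto_sup.mpr ⟨hφbot, hφtop⟩
  -- main argument
  intro x₀
  by_contra hcon
  push_neg at hcon
  have hφ0 : 0 < φ x₀ := by
    rw [ha2, hb2, div_div_eq_mul_div, div_div_eq_mul_div, ← add_div,
      lt_div_iff₀ hμ] at hcon
    simp only [hφdef]
    nlinarith
  have hev : ∀ᶠ x in cocompact ℝ, φ x ≤ φ x₀ :=
    (hco.eventually_lt_const hφ0).mono fun x hx => hx.le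
  obtain ⟨z, hz⟩ := hφCD.continuous.exists_forall_ge' x₀ hev
  have hφz : 0 < φ z := lt_of_lt_of_le hφ0 (hz x₀)
  have hsecond : deriv (deriv φ) z ≤ 0 := deriv2_nonpos_of_max φ hφCD z hz
  have hD₁ : deriv (deriv u₁) z = g₁₁ * (u₁ z ^ 2 - a ^ 2) * u₁ z + g₁₂ * u₁ z * u₂ z ^ 2 := by
    have := heq₁ z; linarith
  have hD₂ : deriv (deriv u₂) z = g₂₂ * (u₂ z ^ 2 - b ^ 2) * u₂ z + g₁₂ * u₁ z ^ 2 * u₂ z := by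
    have := heq₂ z; linarith
  rw [hD2 z, hD₁, hD₂] at hsecond
  have hφz' : 0 < s₁ * u₁ z ^ 2 + s₂ * u₂ z ^ 2 - μ := hφz
  exact gp_final_contradiction g₁₁ g₂₂ g₁₂ μ a b s₁ s₂ (u₁ z) (u₂ z)
    (deriv u₁ z) (deriv u₂ z) hs₁ hs₂ hμ hs₁sq hs₂sq hga hgb hg12.le hφz' hsecond
end

section
/- Consider the spectral problem L₊Φ_R = −λΦ_I, L₋Φ_I = λΦ_R, where L₊ and L₋ are self-adjoint operators on L²(ℝ;ℝ²) with L₋ ≥ 0 and L₊ ≥ 0, zero a simple isolated eigenvalue of L₊ with eigenvector ψ₀, and L₊ coercive on {ψ₀}^⊥ (i.e. ⟨L₊⁻¹Φ,Φ⟩ ≥ C‖Φ‖² for Φ ∈ {ψ₀}^⊥ for some C > 0). Then any eigenvalue λ with a nontrivial eigenvector (Φ_R, Φ_I) satisfies λ² ≤ 0, i.e. λ is purely imaginary. -/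
open InnerProductSpace Complex

private lemma pos_inner_zero
    {H : Type*} [NormedAddCommGroup H] [InnerProductSpace ℂ H] [CompleteSpace H]
    (T : H →L[ℂ] H) (hT : IsSelfAdjoint T)
    (hpos : ∀ x : H, 0 ≤ (⟪x, T x⟫_ℂ).re)
    (x : H) (hx : (⟪x, T x⟫_ℂ).re = 0) : T x = 0 := by
  have hsymm : (T : H →ₗ[ℂ] H).IsSymmetric :=
    (ContinuousLinearMap.isSelfAdjoint_iff_isSymmetric).mp hT
  set c : ℝ := (⟪T x, T (T x)⟫_ℂ).re with hc
  have hc0 : 0 ≤ c := hpos (T x)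
  have hxTTx : ⟪x, T (T x)⟫_ℂ = ((‖T x‖^2 : ℝ) : ℂ) := by
    have h := hsymm x (T x)
    simp only [ContinuousLinearMap.coe_coe] at h
    rw [← h, inner_self_eq_norm_sq_to_K]
    norm_cast
  have hTxTx : ⟪T x, T x⟫_ℂ = ((‖T x‖^2 : ℝ) : ℂ) := by
    rw [inner_self_eq_norm_sq_to_K]; norm_cast
  have expand : ∀ t : ℝ, 0 ≤ 2 * t * ‖T x‖^2 + t^2 * c := by
    intro t
    have h1 : ⟪x + (t:ℂ) • T x, T (x + (t:ℂ) • T x)⟫_ℂ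
        = ⟪x, T x⟫_ℂ + (t:ℂ) * ⟪x, T (T x)⟫_ℂ + (t:ℂ) * ⟪T x, T x⟫_ℂ
          + (t:ℂ)^2 * ⟪T x, T (T x)⟫_ℂ := by
      rw [map_add, map_smul, inner_add_left, inner_add_right, inner_add_right,
        inner_smul_left, inner_smul_left, inner_smul_right, inner_smul_right,
        Complex.conj_ofReal]
      ring
    have h2 := hpos (x + (t:ℂ) • T x)
    rw [h1, hxTTx, hTxTx] at h2
    have h3 : ((t:ℂ)^2) = ((t^2 : ℝ) : ℂ) := by push_cast; ring
    rw [h3, ← Complex.ofReal_mul] at h2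
    simp only [Complex.add_re, hx, Complex.ofReal_re, Complex.mul_re,
      Complex.ofReal_im, Complex.zero_re] at h2
    nlinarith [h2]
  have hn : ‖T x‖^2 = 0 := by
    by_contra hne
    have hn0 : 0 < ‖T x‖^2 := lt_of_le_of_ne (by positivity) (Ne.symm hne)
    have hc1 : 0 < c + 1 := by linarith
    have h := expand (-(‖T x‖^2) / (c + 1))
    have h' := mul_le_mul_of_nonneg_left h (le_of_lt (mul_pos hc1 hc1))
    rw [mul_zero] at h'
    have hexp : (c+1)*(c+1) * (2 * (-(‖T x‖^2) / (c + 1)) * ‖T x‖^2 + (-(‖T x‖^2) / (c + 1))^2 * c)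
        = -2*(c+1)*(‖T x‖^2)^2 + (‖T x‖^2)^2 * c := by
      field_simp
    rw [hexp] at h'
    nlinarith [h', hn0, mul_pos hn0 hn0]
  have : ‖T x‖ = 0 := by nlinarith [norm_nonneg (T x)]
  exact norm_eq_zero.mp this

theorem spectral_stability_abstract
    {H : Type*} [NormedAddCommGroup H] [InnerProductSpace ℂ H] [CompleteSpace H]
    (Lp Lm : H →L[ℂ] H)
    (hLp : IsSelfAdjoint Lp) (hLm : IsSelfAdjoint Lm)
    (hLppos : ∀ x : H, 0 ≤ (⟪x, Lp x⟫_ℂ).re)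
    (hLmpos : ∀ x : H, 0 ≤ (⟪x, Lm x⟫_ℂ).re)
    (ψ₀ : H) (hψ₀ : ψ₀ ≠ 0)
    (hker : ∀ x : H, Lp x = 0 ↔ ∃ c : ℂ, x = c • ψ₀)
    (C : ℝ) (hC : 0 < C)
    (hcoer : ∀ Φ Ψ : H, ⟪ψ₀, Φ⟫_ℂ = 0 → Lp Ψ = Φ →
      C * ‖Φ‖^2 ≤ (⟪Ψ, Φ⟫_ℂ).re)
    (lam : ℂ) (ΦR ΦI : H)
    (hnt : ¬(ΦR = 0 ∧ ΦI = 0))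
    (heig₁ : Lp ΦR = -(lam • ΦI))
    (heig₂ : Lm ΦI = lam • ΦR) :
    lam.re = 0 := by
  set s : ℂ := ⟪ΦR, ΦI⟫_ℂ with hs_def
  have hp_eq : ⟪ΦR, Lp ΦR⟫_ℂ = -(lam * s) := by
    rw [heig₁, inner_neg_right, inner_smul_right]
  have hIR : ⟪ΦI, ΦR⟫_ℂ = (starRingEnd ℂ) s := by
    rw [hs_def, inner_conj_symm]
  have hm_eq : ⟪ΦI, Lm ΦI⟫_ℂ = lam * (starRingEnd ℂ) s := by
    rw [heig₂, inner_smul_right, hIR]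
  have real_of_sa : ∀ (T : H →L[ℂ] H), IsSelfAdjoint T → ∀ x : H,
      (⟪x, T x⟫_ℂ).im = 0 := by
    intro T hT x
    have hsymm : (T : H →ₗ[ℂ] H).IsSymmetric :=
      (ContinuousLinearMap.isSelfAdjoint_iff_isSymmetric).mp hT
    have h := hsymm x x
    simp only [ContinuousLinearMap.coe_coe] at h
    have h2 : (starRingEnd ℂ) ⟪x, T x⟫_ℂ = ⟪x, T x⟫_ℂ := by
      rw [inner_conj_symm]; exact h
    exact Complex.conj_eq_iff_im.mp h2
  by_cases hs : s = 0
  · have h1 : (⟪ΦR, Lp ΦR⟫_ℂ).re = 0 := by rw [hp_eq, hs]; simp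
    have h2 : (⟪ΦI, Lm ΦI⟫_ℂ).re = 0 := by rw [hm_eq, hs]; simp
    have hLpz : Lp ΦR = 0 := pos_inner_zero Lp hLp hLppos ΦR h1
    have hLmz : Lm ΦI = 0 := pos_inner_zero Lm hLm hLmpos ΦI h2
    rw [heig₁] at hLpz; rw [heig₂] at hLmz
    by_cases hlam : lam = 0
    · rw [hlam]; rfl
    · exfalso
      apply hnt
      have hI : ΦI = 0 := by
        have := neg_eq_zero.mp hLpz
        rcases smul_eq_zero.mp this with h | h
        · exact absurd h hlam
        · exact h
      have hR : ΦR = 0 := by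
        rcases smul_eq_zero.mp hLmz with h | h
        · exact absurd h hlam
        · exact h
      exact ⟨hR, hI⟩
  · set p : ℝ := (⟪ΦR, Lp ΦR⟫_ℂ).re with hp_def
    set m : ℝ := (⟪ΦI, Lm ΦI⟫_ℂ).re with hm_def
    have hp0 : 0 ≤ p := hLppos ΦR
    have hm0 : 0 ≤ m := hLmpos ΦI
    have hpC : ⟪ΦR, Lp ΦR⟫_ℂ = (p : ℂ) := by
      apply Complex.ext
      · simpa using hp_def.symm
      · simp [real_of_sa Lp hLp ΦR]
    have hmC : ⟪ΦI, Lm ΦI⟫_ℂ = (m : ℂ) := by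
      apply Complex.ext
      · simpa using hm_def.symm
      · simp [real_of_sa Lm hLm ΦI]
    have h1 : lam * s = -(p : ℂ) := by
      have := hp_eq.symm.trans hpC
      linear_combination -this
    have h2 : lam * (starRingEnd ℂ) s = (m : ℂ) := hm_eq.symm.trans hmC
    have hprod : lam ^ 2 * ((Complex.normSq s : ℝ) : ℂ) = ((-(p * m) : ℝ) : ℂ) := by
      calc lam ^ 2 * ((Complex.normSq s : ℝ) : ℂ)
          = (lam * s) * (lam * (starRingEnd ℂ) s) := by
            rw [← Complex.mul_conj]; ring
        _ = -(p : ℂ) * (m : ℂ) := by rw [h1, h2]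
        _ = ((-(p * m) : ℝ) : ℂ) := by push_cast; ring
    have hns : (0 : ℝ) < Complex.normSq s := Complex.normSq_pos.mpr hs
    have hnsC : ((Complex.normSq s : ℝ) : ℂ) ≠ 0 := by
      simp [ne_of_gt hns]
    have hsq : lam ^ 2 = ((-(p * m) / Complex.normSq s : ℝ) : ℂ) := by
      rw [Complex.ofReal_div, eq_div_iff hnsC]
      exact hprod
    have him : (lam ^ 2).im = 0 := by rw [hsq]; simp
    have hre : (lam ^ 2).re ≤ 0 := by
      rw [hsq]
      simp only [Complex.ofReal_re]
      apply div_nonpos_of_nonpos_of_nonneg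
      · nlinarith
      · exact le_of_lt hns
    have h2ab : 2 * lam.re * lam.im = 0 := by
      have h : (lam ^ 2).im = 2 * lam.re * lam.im := by
        rw [sq, Complex.mul_im]; ring
      rw [h] at him; linarith
    have habsq : lam.re ^ 2 - lam.im ^ 2 ≤ 0 := by
      have h : (lam ^ 2).re = lam.re ^ 2 - lam.im ^ 2 := by
        rw [sq, Complex.mul_re]; ring
      rw [h] at hre; linarith
    by_contra ha
    have hb : lam.im = 0 := by
      rcases mul_eq_zero.mp h2ab with h | h
      · rcases mul_eq_zero.mp h with h' | h'
        · norm_num at h'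
        · exact absurd h' ha
      · exact h
    rw [hb] at habsq
    have h0 : lam.re ^ 2 ≤ 0 := by linarith
    exact ha (pow_eq_zero_iff (by norm_num) |>.mp (le_antisymm h0 (sq_nonneg _)))
end

section
/- Let c₁₁, c₂₂ : ℝ → ℝ be continuous with c₁₁, c₂₂ ≥ 0 outside a compact set, and let φ : ℝ → ℝ be C² with φ(x) → 0 as x → ±∞, satisfying −½φ'' + q(x)φ ≤ 0 on ℝ for a continuous function q ≥ 0 that is strictly positive on a set of positive measure. If moreover φ₊ = max(φ,0) ∈ H¹(ℝ), then ∫ℝ [½(φ₊')² + q φ₊²] dx ≤ 0, and hence φ(x) ≤ 0 for all x where q > 0 on a neighborhood, and in fact φ ≤ 0 on ℝ if q > 0 everywhere. -/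
open Filter MeasureTheory Set

theorem energy_maximum_principle
    (c₁₁ c₂₂ : ℝ → ℝ) (hc₁₁ : Continuous c₁₁) (hc₂₂ : Continuous c₂₂)
    (hout : ∃ K : Set ℝ, IsCompact K ∧ ∀ x ∉ K, 0 ≤ c₁₁ x ∧ 0 ≤ c₂₂ x)
    (φ : ℝ → ℝ) (hφ : ContDiff ℝ 2 φ)
    (hlim_top : Tendsto φ atTop (nhds 0)) (hlim_bot : Tendsto φ atBot (nhds 0))
    (q : ℝ → ℝ) (hq : Continuous q) (hqpos : ∀ x, 0 ≤ q x)
    (hqset : 0 < volume {x | 0 < q x})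
    (hineq : ∀ x, -(1/2) * deriv (deriv φ) x + q x * φ x ≤ 0)
    (hH1a : MemLp (fun x => max (φ x) 0) 2 volume)
    (hH1b : MemLp (deriv (fun x => max (φ x) 0)) 2 volume) :
    (∫ x : ℝ, ((1/2) * (deriv (fun y => max (φ y) 0) x)^2
        + q x * (max (φ x) 0)^2) ≤ 0) ∧
    (∀ x : ℝ, (∀ᶠ y in nhds x, 0 < q y) → φ x ≤ 0) ∧
    ((∀ x, 0 < q x) → ∀ x, φ x ≤ 0) := by
  have hφc : Continuous φ := hφ.continuous
  have hφd : Differentiable ℝ φ := hφ.differentiable two_ne_zero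
  have hφ' : ContDiff ℝ 1 (deriv φ) :=
    ((contDiff_succ_iff_deriv (n := 1)).mp (by exact_mod_cast hφ)).2.2
  have hφ'd : Differentiable ℝ (deriv φ) := hφ'.differentiable one_ne_zero
  -- core: φ ≤ 0 everywhere
  have hle : ∀ x, φ x ≤ 0 := by
    intro z
    by_contra hz
    push_neg at hz
    set M := φ z with hM
    have hM2 : 0 < M / 2 := by linarith
    -- left endpoint
    obtain ⟨a, haz, haA⟩ : ∃ a, (a ≤ z ∧ φ a ≤ M / 2) ∧
        ∀ x ∈ {x | x ≤ z ∧ φ x ≤ M / 2}, x ≤ a := by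
      have hA : ∃ x, x ≤ z ∧ φ x ≤ M / 2 := by
        have h1 : ∀ᶠ x in atBot, φ x < M / 2 := hlim_bot.eventually (eventually_lt_nhds hM2)
        have h2 : ∀ᶠ x : ℝ in atBot, x ≤ z := eventually_le_atBot z
        obtain ⟨x, hx1, hx2⟩ := (h1.and h2).exists
        exact ⟨x, hx2, hx1.le⟩
      have hclosed : IsClosed {x | x ≤ z ∧ φ x ≤ M / 2} :=
        (isClosed_le continuous_id continuous_const).inter
          (isClosed_le hφc continuous_const)
      have hbdd : BddAbove {x | x ≤ z ∧ φ x ≤ M / 2} := ⟨z, fun x hx => hx.1⟩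
      refine ⟨sSup _, hclosed.csSup_mem hA hbdd, fun x hx => le_csSup hbdd hx⟩
    obtain ⟨b, hbz, hbB⟩ : ∃ b, (z ≤ b ∧ φ b ≤ M / 2) ∧
        ∀ x ∈ {x | z ≤ x ∧ φ x ≤ M / 2}, b ≤ x := by
      have hB : ∃ x, z ≤ x ∧ φ x ≤ M / 2 := by
        have h1 : ∀ᶠ x in atTop, φ x < M / 2 := hlim_top.eventually (eventually_lt_nhds hM2)
        have h2 : ∀ᶠ x : ℝ in atTop, z ≤ x := eventually_ge_atTop z
        obtain ⟨x, hx1, hx2⟩ := (h1.and h2).exists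
        exact ⟨x, hx2, hx1.le⟩
      have hclosed : IsClosed {x | z ≤ x ∧ φ x ≤ M / 2} :=
        (isClosed_le continuous_const continuous_id).inter
          (isClosed_le hφc continuous_const)
      have hbdd : BddBelow {x | z ≤ x ∧ φ x ≤ M / 2} := ⟨z, fun x hx => hx.1⟩
      refine ⟨sInf _, hclosed.csInf_mem hB hbdd, fun x hx => csInf_le hbdd hx⟩
    have hab : a ≤ b := le_trans haz.1 hbz.1
    -- φ > M/2 on the open interval (a,b)
    have hpos : ∀ x ∈ Ioo a b, M / 2 < φ x := by
      intro x hx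
      by_contra hc
      push_neg at hc
      rcases le_total x z with h | h
      · exact absurd (haA x ⟨h, hc⟩) (not_le.mpr hx.1)
      · exact absurd (hbB x ⟨h, hc⟩) (not_le.mpr hx.2)
    -- convexity on [a,b]
    have hconv : ConvexOn ℝ (Icc a b) φ := by
      apply convexOn_of_deriv2_nonneg (convex_Icc a b) hφc.continuousOn
        hφd.differentiableOn hφ'd.differentiableOn
      intro x hx
      rw [interior_Icc] at hx
      have h1 := hineq x
      have h2 : 0 ≤ q x * φ x := mul_nonneg (hqpos x) (le_of_lt (lt_trans hM2 (hpos x hx)))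
      simp only [Function.iterate_succ, Function.iterate_zero, Function.comp_apply, id_eq]
      linarith
    have hz' : z ∈ Icc a b := ⟨haz.1, hbz.1⟩
    have := hconv.le_max_of_mem_Icc (left_mem_Icc.mpr hab) (right_mem_Icc.mpr hab) hz'
    have : M ≤ M / 2 := le_trans this (max_le haz.2 hbz.2)
    linarith
  refine ⟨?_, fun x _ => hle x, fun _ x => hle x⟩
  have hzero : ∀ y : ℝ, max (φ y) 0 = 0 := fun y => max_eq_right (hle y)
  have hfun : (fun y => max (φ y) 0) = fun _ => (0 : ℝ) := funext hzero
  simp [hfun, hzero]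
end

section
/- Suppose (u₁,u₂) solves the unperturbed domain wall system and V ∈ C²(ℝ) with V' and V'' decaying suitably, and (w₁,w₂) solves the linear inhomogeneous system −w₁'' + (3u₁² + γu₂² − 1)w₁ + 2γu₁u₂w₂ = −Vu₁, −w₂'' + (γu₁² + 3u₂² − 1)w₂ + 2γu₁u₂w₁ = −Vu₂, with all functions and derivatives decaying exponentially at ±∞. Then σ := ∫ℝ [V((u₁')² + (u₂')²) + 6u₁w₁(u₁')² + 6u₂w₂(u₂')² + 2γu₂w₂(u₁')² + 2γu₁w₁(u₂')² + 4γ(u₁w₂ + u₂w₁)u₁'u₂'] dx equals ½∫ℝ V''(x)(u₁² + u₂² − 1) dx. -/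
open Filter MeasureTheory
section MelnikovAux
open Set

lemma integrable_exp_neg_mul_abs' {δ : ℝ} (hδ : 0 < δ) :
    Integrable (fun x : ℝ => Real.exp (-δ * |x|)) := by
  have h1 : IntegrableOn (fun x : ℝ => Real.exp (-δ * |x|)) (Ioi 0) := by
    refine (exp_neg_integrableOn_Ioi 0 hδ).congr_fun (fun x hx => ?_) measurableSet_Ioi
    rw [abs_of_pos hx]
  have h3 : IntegrableOn (fun x : ℝ => Real.exp (-δ * |x|)) (Ici 0) :=
    Iff.mpr integrableOn_Ici_iff_integrableOn_Ioi h1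
  have h2 : IntegrableOn (fun x : ℝ => Real.exp (-δ * |x|)) (Iic 0) := by
    have hemb : MeasurableEmbedding (fun x : ℝ => -x) :=
      (Homeomorph.neg ℝ).measurableEmbedding
    have hmp : MeasurePreserving (fun x : ℝ => -x)
        (volume : Measure ℝ) (volume : Measure ℝ) := Measure.measurePreserving_neg _
    have h4 := (hmp.integrableOn_comp_preimage hemb).2 h3
    have hset : (fun x : ℝ => -x) ⁻¹' (Ici 0) = Iic 0 := by ext y; simp
    rw [hset] at h4
    refine h4.congr_fun (fun x _ => ?_) measurableSet_Iic
    simp [Function.comp, abs_neg]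
  have h5 := h2.union h1
  rw [Iic_union_Ioi] at h5
  exact integrableOn_univ.mp h5

lemma hasDerivAt_Hmel (γ : ℝ) (u₁ u₂ w₁ w₂ V du₁ du₂ dw₁ dw₂ dV : ℝ → ℝ) (ddV : ℝ) (x : ℝ)
    (h1 : HasDerivAt u₁ (du₁ x) x)
    (h1' : HasDerivAt du₁ ((u₁ x ^ 2 + γ * u₂ x ^ 2 - 1) * u₁ x) x)
    (h2 : HasDerivAt u₂ (du₂ x) x)
    (h2' : HasDerivAt du₂ ((γ * u₁ x ^ 2 + u₂ x ^ 2 - 1) * u₂ x) x)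
    (h3 : HasDerivAt w₁ (dw₁ x) x)
    (h3' : HasDerivAt dw₁ ((3 * u₁ x ^ 2 + γ * u₂ x ^ 2 - 1) * w₁ x
      + 2 * γ * u₁ x * u₂ x * w₂ x + V x * u₁ x) x)
    (h4 : HasDerivAt w₂ (dw₂ x) x)
    (h4' : HasDerivAt dw₂ ((γ * u₁ x ^ 2 + 3 * u₂ x ^ 2 - 1) * w₂ x
      + 2 * γ * u₁ x * u₂ x * w₁ x + V x * u₂ x) x)
    (h5 : HasDerivAt V (dV x) x)
    (h5' : HasDerivAt dV ddV x) :
    HasDerivAt (fun y =>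
      (1/2) * (V y * (2 * u₁ y * du₁ y + 2 * u₂ y * du₂ y) - dV y * (u₁ y ^ 2 + u₂ y ^ 2 - 1))
      - (u₁ y ^ 2 + γ * u₂ y ^ 2 - 1) * u₁ y * dw₁ y
      - (γ * u₁ y ^ 2 + u₂ y ^ 2 - 1) * u₂ y * dw₂ y
      + ((3 * u₁ y ^ 2 + γ * u₂ y ^ 2 - 1) * du₁ y + 2 * γ * u₁ y * u₂ y * du₂ y) * w₁ y
      + ((γ * u₁ y ^ 2 + 3 * u₂ y ^ 2 - 1) * du₂ y + 2 * γ * u₁ y * u₂ y * du₁ y) * w₂ y)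
    (V x * ((du₁ x)^2 + (du₂ x)^2)
      + 6 * u₁ x * w₁ x * (du₁ x)^2
      + 6 * u₂ x * w₂ x * (du₂ x)^2
      + 2 * γ * u₂ x * w₂ x * (du₁ x)^2
      + 2 * γ * u₁ x * w₁ x * (du₂ x)^2
      + 4 * γ * (u₁ x * w₂ x + u₂ x * w₁ x) * du₁ x * du₂ x
      - (1/2) * (ddV * (u₁ x ^ 2 + u₂ x ^ 2 - 1))) x := by
  have T1 := ((h5.mul (((h1.const_mul 2).mul h1').add ((h2.const_mul 2).mul h2'))).sub
    (h5'.mul (((h1.pow 2).add (h2.pow 2)).sub_const 1))).const_mul (1/2)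
  have T2 := ((((h1.pow 2).add ((h2.pow 2).const_mul γ)).sub_const 1).mul h1).mul h3'
  have T3 := ((((h1.pow 2).const_mul γ).add (h2.pow 2)).sub_const 1).mul h2 |>.mul h4'
  have T4 := (((((h1.pow 2).const_mul 3).add ((h2.pow 2).const_mul γ)).sub_const 1).mul h1').add
      (((h1.const_mul (2*γ)).mul h2).mul h2') |>.mul h3
  have T5 := (((((h1.pow 2).const_mul γ).add ((h2.pow 2).const_mul 3)).sub_const 1).mul h2').add
      (((h1.const_mul (2*γ)).mul h2).mul h1') |>.mul h4
  have key := (((T1.sub T2).sub T3).add T4).add T5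
  refine (key.congr_deriv ?_).congr_of_eventuallyEq (Filter.Eventually.of_forall fun y => ?_)
  · simp only [Pi.add_apply, Pi.mul_apply, Pi.pow_apply, Pi.sub_apply]
    push_cast
    ring
  · simp only [Pi.add_apply, Pi.mul_apply, Pi.pow_apply, Pi.sub_apply]

end MelnikovAux

theorem melnikov_sigma_identity
    (γ : ℝ) (hγ : 1 < γ)
    (u₁ u₂ : ℝ → ℝ)
    (hu₁ : ContDiff ℝ 2 u₁) (hu₂ : ContDiff ℝ 2 u₂)
    (heq₁ : ∀ x, -(deriv (deriv u₁) x) + (u₁ x ^ 2 + γ * u₂ x ^ 2 - 1) * u₁ x = 0)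
    (heq₂ : ∀ x, -(deriv (deriv u₂) x) + (γ * u₁ x ^ 2 + u₂ x ^ 2 - 1) * u₂ x = 0)
    (hbc_top : Tendsto (fun x => (u₁ x, u₂ x)) atTop (nhds (1, 0)))
    (hbc_bot : Tendsto (fun x => (u₁ x, u₂ x)) atBot (nhds (0, 1)))
    (V : ℝ → ℝ) (hV : ContDiff ℝ 2 V)
    (w₁ w₂ : ℝ → ℝ)
    (hw₁ : ContDiff ℝ 2 w₁) (hw₂ : ContDiff ℝ 2 w₂)
    (hweq₁ : ∀ x, -(deriv (deriv w₁) x)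
      + (3 * u₁ x ^ 2 + γ * u₂ x ^ 2 - 1) * w₁ x
      + 2 * γ * u₁ x * u₂ x * w₂ x = -(V x * u₁ x))
    (hweq₂ : ∀ x, -(deriv (deriv w₂) x)
      + (γ * u₁ x ^ 2 + 3 * u₂ x ^ 2 - 1) * w₂ x
      + 2 * γ * u₁ x * u₂ x * w₁ x = -(V x * u₂ x))
    (hdecay : ∃ M > 0, ∃ δ > 0, ∀ x : ℝ,
      |deriv u₁ x| + |deriv u₂ x| + |w₁ x| + |w₂ x|
        + |deriv w₁ x| + |deriv w₂ x| + |u₁ x ^ 2 + u₂ x ^ 2 - 1|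
          ≤ M * Real.exp (-δ * |x|))
    (hVbdd : ∃ M, ∀ x : ℝ, |V x| + |deriv V x| + |deriv (deriv V) x| ≤ M) :
    (∫ x : ℝ,
      (V x * ((deriv u₁ x)^2 + (deriv u₂ x)^2)
        + 6 * u₁ x * w₁ x * (deriv u₁ x)^2
        + 6 * u₂ x * w₂ x * (deriv u₂ x)^2
        + 2 * γ * u₂ x * w₂ x * (deriv u₁ x)^2
        + 2 * γ * u₁ x * w₁ x * (deriv u₂ x)^2
        + 4 * γ * (u₁ x * w₂ x + u₂ x * w₁ x) * deriv u₁ x * deriv u₂ x))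
    = (1/2) * ∫ x : ℝ, deriv (deriv V) x * (u₁ x ^ 2 + u₂ x ^ 2 - 1) := by

  obtain ⟨M, hM, δ, hδ, hdec⟩ := hdecay
  obtain ⟨MV, hMV⟩ := hVbdd
  have hγ0 : (0:ℝ) < γ := by linarith
  -- regularity
  have h2eq : (2 : WithTop ℕ∞) = 1 + 1 := by norm_num
  have hu₁s := contDiff_succ_iff_deriv.mp (h2eq ▸ hu₁)
  have hu₂s := contDiff_succ_iff_deriv.mp (h2eq ▸ hu₂)
  have hw₁s := contDiff_succ_iff_deriv.mp (h2eq ▸ hw₁)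
  have hw₂s := contDiff_succ_iff_deriv.mp (h2eq ▸ hw₂)
  have hVs := contDiff_succ_iff_deriv.mp (h2eq ▸ hV)
  have d_u₁ : Differentiable ℝ u₁ := hu₁s.1
  have d_u₂ : Differentiable ℝ u₂ := hu₂s.1
  have d_w₁ : Differentiable ℝ w₁ := hw₁s.1
  have d_w₂ : Differentiable ℝ w₂ := hw₂s.1
  have d_V : Differentiable ℝ V := hVs.1
  have d_du₁ : Differentiable ℝ (deriv u₁) := hu₁s.2.2.differentiable one_ne_zero
  have d_du₂ : Differentiable ℝ (deriv u₂) := hu₂s.2.2.differentiable one_ne_zero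
  have d_dw₁ : Differentiable ℝ (deriv w₁) := hw₁s.2.2.differentiable one_ne_zero
  have d_dw₂ : Differentiable ℝ (deriv w₂) := hw₂s.2.2.differentiable one_ne_zero
  have d_dV : Differentiable ℝ (deriv V) := hVs.2.2.differentiable one_ne_zero
  have c_u₁ : Continuous u₁ := d_u₁.continuous
  have c_u₂ : Continuous u₂ := d_u₂.continuous
  have c_w₁ : Continuous w₁ := d_w₁.continuous
  have c_w₂ : Continuous w₂ := d_w₂.continuous
  have c_V : Continuous V := d_V.continuous
  have c_du₁ : Continuous (deriv u₁) := d_du₁.continuous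
  have c_du₂ : Continuous (deriv u₂) := d_du₂.continuous
  have c_dw₁ : Continuous (deriv w₁) := d_dw₁.continuous
  have c_dw₂ : Continuous (deriv w₂) := d_dw₂.continuous
  have c_dV : Continuous (deriv V) := d_dV.continuous
  have c_ddV : Continuous (deriv (deriv V)) := (contDiff_one_iff_deriv.mp hVs.2.2).2
  -- second-derivative facts
  have Du₁ : ∀ x, HasDerivAt (deriv u₁) ((u₁ x ^ 2 + γ * u₂ x ^ 2 - 1) * u₁ x) x := by
    intro x
    have h := (d_du₁ x).hasDerivAt
    have e : deriv (deriv u₁) x = (u₁ x ^ 2 + γ * u₂ x ^ 2 - 1) * u₁ x := by linarith [heq₁ x]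
    rwa [e] at h
  have Du₂ : ∀ x, HasDerivAt (deriv u₂) ((γ * u₁ x ^ 2 + u₂ x ^ 2 - 1) * u₂ x) x := by
    intro x
    have h := (d_du₂ x).hasDerivAt
    have e : deriv (deriv u₂) x = (γ * u₁ x ^ 2 + u₂ x ^ 2 - 1) * u₂ x := by linarith [heq₂ x]
    rwa [e] at h
  have Dw₁ : ∀ x, HasDerivAt (deriv w₁) ((3 * u₁ x ^ 2 + γ * u₂ x ^ 2 - 1) * w₁ x
      + 2 * γ * u₁ x * u₂ x * w₂ x + V x * u₁ x) x := by
    intro x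
    have h := (d_dw₁ x).hasDerivAt
    have e : deriv (deriv w₁) x = (3 * u₁ x ^ 2 + γ * u₂ x ^ 2 - 1) * w₁ x
        + 2 * γ * u₁ x * u₂ x * w₂ x + V x * u₁ x := by linarith [hweq₁ x]
    rwa [e] at h
  have Dw₂ : ∀ x, HasDerivAt (deriv w₂) ((γ * u₁ x ^ 2 + 3 * u₂ x ^ 2 - 1) * w₂ x
      + 2 * γ * u₁ x * u₂ x * w₁ x + V x * u₂ x) x := by
    intro x
    have h := (d_dw₂ x).hasDerivAt
    have e : deriv (deriv w₂) x = (γ * u₁ x ^ 2 + 3 * u₂ x ^ 2 - 1) * w₂ x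
        + 2 * γ * u₁ x * u₂ x * w₁ x + V x * u₂ x := by linarith [hweq₂ x]
    rwa [e] at h
  -- elementary bounds
  have hE0 : ∀ x : ℝ, (0:ℝ) < Real.exp (-δ * |x|) := fun x => Real.exp_pos _
  have hE1 : ∀ x : ℝ, Real.exp (-δ * |x|) ≤ 1 := by
    intro x
    apply Real.exp_le_one_iff.mpr
    rw [neg_mul]
    exact neg_nonpos.mpr (mul_nonneg hδ.le (abs_nonneg x))
  have hME : ∀ x : ℝ, M * Real.exp (-δ * |x|) ≤ M := fun x => by nlinarith [hE0 x, hE1 x]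
  have b1 : ∀ x, |deriv u₁ x| ≤ M * Real.exp (-δ * |x|) := fun x => by
    linarith [hdec x, abs_nonneg (deriv u₂ x), abs_nonneg (w₁ x), abs_nonneg (w₂ x),
      abs_nonneg (deriv w₁ x), abs_nonneg (deriv w₂ x), abs_nonneg (u₁ x ^ 2 + u₂ x ^ 2 - 1)]
  have b2 : ∀ x, |deriv u₂ x| ≤ M * Real.exp (-δ * |x|) := fun x => by
    linarith [hdec x, abs_nonneg (deriv u₁ x), abs_nonneg (w₁ x), abs_nonneg (w₂ x),
      abs_nonneg (deriv w₁ x), abs_nonneg (deriv w₂ x), abs_nonneg (u₁ x ^ 2 + u₂ x ^ 2 - 1)]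
  have b3 : ∀ x, |w₁ x| ≤ M * Real.exp (-δ * |x|) := fun x => by
    linarith [hdec x, abs_nonneg (deriv u₁ x), abs_nonneg (deriv u₂ x), abs_nonneg (w₂ x),
      abs_nonneg (deriv w₁ x), abs_nonneg (deriv w₂ x), abs_nonneg (u₁ x ^ 2 + u₂ x ^ 2 - 1)]
  have b4 : ∀ x, |w₂ x| ≤ M * Real.exp (-δ * |x|) := fun x => by
    linarith [hdec x, abs_nonneg (deriv u₁ x), abs_nonneg (deriv u₂ x), abs_nonneg (w₁ x),
      abs_nonneg (deriv w₁ x), abs_nonneg (deriv w₂ x), abs_nonneg (u₁ x ^ 2 + u₂ x ^ 2 - 1)]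
  have b5 : ∀ x, |deriv w₁ x| ≤ M * Real.exp (-δ * |x|) := fun x => by
    linarith [hdec x, abs_nonneg (deriv u₁ x), abs_nonneg (deriv u₂ x), abs_nonneg (w₁ x),
      abs_nonneg (w₂ x), abs_nonneg (deriv w₂ x), abs_nonneg (u₁ x ^ 2 + u₂ x ^ 2 - 1)]
  have b6 : ∀ x, |deriv w₂ x| ≤ M * Real.exp (-δ * |x|) := fun x => by
    linarith [hdec x, abs_nonneg (deriv u₁ x), abs_nonneg (deriv u₂ x), abs_nonneg (w₁ x),
      abs_nonneg (w₂ x), abs_nonneg (deriv w₁ x), abs_nonneg (u₁ x ^ 2 + u₂ x ^ 2 - 1)]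
  have b7 : ∀ x, |u₁ x ^ 2 + u₂ x ^ 2 - 1| ≤ M * Real.exp (-δ * |x|) := fun x => by
    linarith [hdec x, abs_nonneg (deriv u₁ x), abs_nonneg (deriv u₂ x), abs_nonneg (w₁ x),
      abs_nonneg (w₂ x), abs_nonneg (deriv w₁ x), abs_nonneg (deriv w₂ x)]
  have b1M : ∀ x, |deriv u₁ x| ≤ M := fun x => (b1 x).trans (hME x)
  have b2M : ∀ x, |deriv u₂ x| ≤ M := fun x => (b2 x).trans (hME x)
  have hMV0 : (0:ℝ) ≤ MV := le_trans (by positivity) (hMV 0)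
  have bV : ∀ x, |V x| ≤ MV := fun x => by
    linarith [hMV x, abs_nonneg (deriv V x), abs_nonneg (deriv (deriv V) x)]
  have bV1 : ∀ x, |deriv V x| ≤ MV := fun x => by
    linarith [hMV x, abs_nonneg (V x), abs_nonneg (deriv (deriv V) x)]
  have bV2 : ∀ x, |deriv (deriv V) x| ≤ MV := fun x => by
    linarith [hMV x, abs_nonneg (V x), abs_nonneg (deriv V x)]
  have hsq : ∀ x, u₁ x ^ 2 ≤ 1 + M ∧ u₂ x ^ 2 ≤ 1 + M := by
    intro x
    have h7 := (b7 x).trans (hME x)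
    have h8 := abs_le.mp h7
    constructor <;> nlinarith [sq_nonneg (u₁ x), sq_nonneg (u₂ x)]
  have hB1 : ∀ x, |u₁ x| ≤ Real.sqrt (1 + M) := by
    intro x
    rw [← Real.sqrt_sq_eq_abs]
    exact Real.sqrt_le_sqrt (hsq x).1
  have hB2 : ∀ x, |u₂ x| ≤ Real.sqrt (1 + M) := by
    intro x
    rw [← Real.sqrt_sq_eq_abs]
    exact Real.sqrt_le_sqrt (hsq x).2
  have bK1 : ∀ x, |u₁ x ^ 2 + γ * u₂ x ^ 2 - 1| ≤ (3 + γ) * (1 + M) + 1 := by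
    intro x
    have h1 := (hsq x).1; have h2 := (hsq x).2
    have h3 : γ * u₂ x ^ 2 ≤ γ * (1 + M) := mul_le_mul_of_nonneg_left h2 hγ0.le
    have h4 : 0 ≤ γ * u₂ x ^ 2 := mul_nonneg hγ0.le (sq_nonneg _)
    rw [abs_le]
    constructor <;> nlinarith [sq_nonneg (u₁ x), hM]
  have bK2 : ∀ x, |γ * u₁ x ^ 2 + u₂ x ^ 2 - 1| ≤ (3 + γ) * (1 + M) + 1 := by
    intro x
    have h1 := (hsq x).1; have h2 := (hsq x).2
    have h3 : γ * u₁ x ^ 2 ≤ γ * (1 + M) := mul_le_mul_of_nonneg_left h1 hγ0.le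
    have h4 : 0 ≤ γ * u₁ x ^ 2 := mul_nonneg hγ0.le (sq_nonneg _)
    rw [abs_le]
    constructor <;> nlinarith [sq_nonneg (u₂ x), hM]
  have bK3 : ∀ x, |3 * u₁ x ^ 2 + γ * u₂ x ^ 2 - 1| ≤ (3 + γ) * (1 + M) + 1 := by
    intro x
    have h1 := (hsq x).1; have h2 := (hsq x).2
    have h3 : γ * u₂ x ^ 2 ≤ γ * (1 + M) := mul_le_mul_of_nonneg_left h2 hγ0.le
    have h4 : 0 ≤ γ * u₂ x ^ 2 := mul_nonneg hγ0.le (sq_nonneg _)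
    rw [abs_le]
    constructor <;> nlinarith [sq_nonneg (u₁ x), hM]
  have bK4 : ∀ x, |γ * u₁ x ^ 2 + 3 * u₂ x ^ 2 - 1| ≤ (3 + γ) * (1 + M) + 1 := by
    intro x
    have h1 := (hsq x).1; have h2 := (hsq x).2
    have h3 : γ * u₁ x ^ 2 ≤ γ * (1 + M) := mul_le_mul_of_nonneg_left h1 hγ0.le
    have h4 : 0 ≤ γ * u₁ x ^ 2 := mul_nonneg hγ0.le (sq_nonneg _)
    rw [abs_le]
    constructor <;> nlinarith [sq_nonneg (u₂ x), hM]
  -- product bound helpers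
  have mb : ∀ a b c d : ℝ, |a| ≤ b → |c| ≤ d → |a * c| ≤ b * d := by
    intro a b c d h1 h2
    rw [abs_mul]
    exact mul_le_mul h1 h2 (abs_nonneg _) ((abs_nonneg a).trans h1)
  have psq : ∀ t C D : ℝ, |t| ≤ C → |t| ≤ D → |t ^ 2| ≤ C * D := by
    intro t C D h1 h2
    rw [abs_pow, pow_two]
    exact mul_le_mul h1 h2 (abs_nonneg _) ((abs_nonneg t).trans h1)
  have h2a : |(2:ℝ)| ≤ 2 := by norm_num
  have h6a : |(6:ℝ)| ≤ 6 := by norm_num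
  have h12a : |(1/2:ℝ)| ≤ 1/2 := le_of_eq (abs_of_pos (by norm_num))
  have h2γa : |2*γ| ≤ 2*γ := le_of_eq (abs_of_pos (by linarith))
  have h4γa : |4*γ| ≤ 4*γ := le_of_eq (abs_of_pos (by linarith))
  -- integrability machinery
  have intE : Integrable (fun x : ℝ => Real.exp (-δ * |x|)) := integrable_exp_neg_mul_abs' hδ
  have key_int : ∀ (k : ℝ → ℝ) (C : ℝ), Continuous k →
      (∀ x, |k x| ≤ C * Real.exp (-δ * |x|)) → Integrable k := by
    intro k C hk hb
    refine (intE.const_mul C).mono' hk.aestronglyMeasurable (ae_of_all _ fun x => ?_)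
    simpa [Real.norm_eq_abs] using hb x
  -- integrability of each term of sigma
  have i1 : Integrable (fun x : ℝ => V x * ((deriv u₁ x)^2 + (deriv u₂ x)^2)) := by
    refine key_int _ (2*MV*M^2) (by fun_prop) (fun x => ?_)
    calc |V x * ((deriv u₁ x)^2 + (deriv u₂ x)^2)|
        ≤ MV * ((M * Real.exp (-δ * |x|)) * M + (M * Real.exp (-δ * |x|)) * M) :=
          mb _ _ _ _ (bV x) ((abs_add_le _ _).trans
            (add_le_add (psq _ _ _ (b1 x) (b1M x)) (psq _ _ _ (b2 x) (b2M x))))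
      _ = 2*MV*M^2 * Real.exp (-δ * |x|) := by ring
  have i2 : Integrable (fun x : ℝ => 6 * u₁ x * w₁ x * (deriv u₁ x)^2) := by
    refine key_int _ (6 * Real.sqrt (1+M) * M^3) (by fun_prop) (fun x => ?_)
    calc |6 * u₁ x * w₁ x * (deriv u₁ x)^2|
        ≤ 6 * Real.sqrt (1+M) * (M * Real.exp (-δ * |x|)) * (M*M) :=
          mb _ _ _ _ (mb _ _ _ _ (mb _ _ _ _ h6a (hB1 x)) (b3 x)) (psq _ _ _ (b1M x) (b1M x))
      _ = 6 * Real.sqrt (1+M) * M^3 * Real.exp (-δ * |x|) := by ring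
  have i3 : Integrable (fun x : ℝ => 6 * u₂ x * w₂ x * (deriv u₂ x)^2) := by
    refine key_int _ (6 * Real.sqrt (1+M) * M^3) (by fun_prop) (fun x => ?_)
    calc |6 * u₂ x * w₂ x * (deriv u₂ x)^2|
        ≤ 6 * Real.sqrt (1+M) * (M * Real.exp (-δ * |x|)) * (M*M) :=
          mb _ _ _ _ (mb _ _ _ _ (mb _ _ _ _ h6a (hB2 x)) (b4 x)) (psq _ _ _ (b2M x) (b2M x))
      _ = 6 * Real.sqrt (1+M) * M^3 * Real.exp (-δ * |x|) := by ring
  have i4 : Integrable (fun x : ℝ => 2 * γ * u₂ x * w₂ x * (deriv u₁ x)^2) := by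
    refine key_int _ (2 * γ * Real.sqrt (1+M) * M^3) (by fun_prop) (fun x => ?_)
    calc |2 * γ * u₂ x * w₂ x * (deriv u₁ x)^2|
        ≤ 2 * γ * Real.sqrt (1+M) * (M * Real.exp (-δ * |x|)) * (M*M) :=
          mb _ _ _ _ (mb _ _ _ _ (mb _ _ _ _ h2γa (hB2 x)) (b4 x)) (psq _ _ _ (b1M x) (b1M x))
      _ = 2 * γ * Real.sqrt (1+M) * M^3 * Real.exp (-δ * |x|) := by ring
  have i5 : Integrable (fun x : ℝ => 2 * γ * u₁ x * w₁ x * (deriv u₂ x)^2) := by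
    refine key_int _ (2 * γ * Real.sqrt (1+M) * M^3) (by fun_prop) (fun x => ?_)
    calc |2 * γ * u₁ x * w₁ x * (deriv u₂ x)^2|
        ≤ 2 * γ * Real.sqrt (1+M) * (M * Real.exp (-δ * |x|)) * (M*M) :=
          mb _ _ _ _ (mb _ _ _ _ (mb _ _ _ _ h2γa (hB1 x)) (b3 x)) (psq _ _ _ (b2M x) (b2M x))
      _ = 2 * γ * Real.sqrt (1+M) * M^3 * Real.exp (-δ * |x|) := by ring
  have i6 : Integrable (fun x : ℝ =>
      4 * γ * (u₁ x * w₂ x + u₂ x * w₁ x) * deriv u₁ x * deriv u₂ x) := by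
    refine key_int _ (8 * γ * Real.sqrt (1+M) * M^3) (by fun_prop) (fun x => ?_)
    calc |4 * γ * (u₁ x * w₂ x + u₂ x * w₁ x) * deriv u₁ x * deriv u₂ x|
        ≤ 4 * γ * (Real.sqrt (1+M) * (M * Real.exp (-δ * |x|))
            + Real.sqrt (1+M) * (M * Real.exp (-δ * |x|))) * M * M :=
          mb _ _ _ _ (mb _ _ _ _ (mb _ _ _ _ h4γa ((abs_add_le _ _).trans
            (add_le_add (mb _ _ _ _ (hB1 x) (b4 x)) (mb _ _ _ _ (hB2 x) (b3 x)))))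
            (b1M x)) (b2M x)
      _ = 8 * γ * Real.sqrt (1+M) * M^3 * Real.exp (-δ * |x|) := by ring
  have i7 : Integrable (fun x : ℝ => deriv (deriv V) x * (u₁ x ^ 2 + u₂ x ^ 2 - 1)) := by
    refine key_int _ (MV * M) (by fun_prop) (fun x => ?_)
    calc |deriv (deriv V) x * (u₁ x ^ 2 + u₂ x ^ 2 - 1)|
        ≤ MV * (M * Real.exp (-δ * |x|)) := mb _ _ _ _ (bV2 x) (b7 x)
      _ = MV * M * Real.exp (-δ * |x|) := by ring
  have isig : Integrable (fun x : ℝ =>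
      V x * ((deriv u₁ x)^2 + (deriv u₂ x)^2)
        + 6 * u₁ x * w₁ x * (deriv u₁ x)^2
        + 6 * u₂ x * w₂ x * (deriv u₂ x)^2
        + 2 * γ * u₂ x * w₂ x * (deriv u₁ x)^2
        + 2 * γ * u₁ x * w₁ x * (deriv u₂ x)^2
        + 4 * γ * (u₁ x * w₂ x + u₂ x * w₁ x) * deriv u₁ x * deriv u₂ x) :=
    ((((i1.add i2).add i3).add i4).add i5).add i6
  -- integrability of H
  have tri : ∀ a b c d e : ℝ, |a - b - c + d + e| ≤ |a| + |b| + |c| + |d| + |e| := by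
    intro a b c d e
    have h1 := abs_add_le (a - b - c + d) e
    have h2 := abs_add_le (a - b - c) d
    have h3 := abs_sub (a - b) c
    have h4 := abs_sub a b
    linarith
  have iH : Integrable (fun y : ℝ =>
      (1/2) * (V y * (2 * u₁ y * deriv u₁ y + 2 * u₂ y * deriv u₂ y)
        - deriv V y * (u₁ y ^ 2 + u₂ y ^ 2 - 1))
      - (u₁ y ^ 2 + γ * u₂ y ^ 2 - 1) * u₁ y * deriv w₁ y
      - (γ * u₁ y ^ 2 + u₂ y ^ 2 - 1) * u₂ y * deriv w₂ y
      + ((3 * u₁ y ^ 2 + γ * u₂ y ^ 2 - 1) * deriv u₁ y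
          + 2 * γ * u₁ y * u₂ y * deriv u₂ y) * w₁ y
      + ((γ * u₁ y ^ 2 + 3 * u₂ y ^ 2 - 1) * deriv u₂ y
          + 2 * γ * u₁ y * u₂ y * deriv u₁ y) * w₂ y) := by
    refine key_int _
      ((1/2) * (MV * (2 * Real.sqrt (1+M) * M + 2 * Real.sqrt (1+M) * M) + MV * M)
        + ((3 + γ) * (1 + M) + 1) * Real.sqrt (1+M) * M
        + ((3 + γ) * (1 + M) + 1) * Real.sqrt (1+M) * M
        + (((3 + γ) * (1 + M) + 1) * M + 2 * γ * Real.sqrt (1+M) * Real.sqrt (1+M) * M) * M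
        + (((3 + γ) * (1 + M) + 1) * M + 2 * γ * Real.sqrt (1+M) * Real.sqrt (1+M) * M) * M)
      (by fun_prop) (fun x => ?_)
    have e1 : |(1/2) * (V x * (2 * u₁ x * deriv u₁ x + 2 * u₂ x * deriv u₂ x)
        - deriv V x * (u₁ x ^ 2 + u₂ x ^ 2 - 1))|
        ≤ (1/2) * (MV * ((2 * Real.sqrt (1+M)) * (M * Real.exp (-δ * |x|))
            + (2 * Real.sqrt (1+M)) * (M * Real.exp (-δ * |x|)))
          + MV * (M * Real.exp (-δ * |x|))) :=
      mb _ _ _ _ h12a ((abs_sub _ _).trans (add_le_add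
        (mb _ _ _ _ (bV x) ((abs_add_le _ _).trans (add_le_add
          (mb _ _ _ _ (mb _ _ _ _ h2a (hB1 x)) (b1 x))
          (mb _ _ _ _ (mb _ _ _ _ h2a (hB2 x)) (b2 x)))))
        (mb _ _ _ _ (bV1 x) (b7 x))))
    have e2 : |(u₁ x ^ 2 + γ * u₂ x ^ 2 - 1) * u₁ x * deriv w₁ x|
        ≤ ((3 + γ) * (1 + M) + 1) * Real.sqrt (1+M) * (M * Real.exp (-δ * |x|)) :=
      mb _ _ _ _ (mb _ _ _ _ (bK1 x) (hB1 x)) (b5 x)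
    have e3 : |(γ * u₁ x ^ 2 + u₂ x ^ 2 - 1) * u₂ x * deriv w₂ x|
        ≤ ((3 + γ) * (1 + M) + 1) * Real.sqrt (1+M) * (M * Real.exp (-δ * |x|)) :=
      mb _ _ _ _ (mb _ _ _ _ (bK2 x) (hB2 x)) (b6 x)
    have e4 : |((3 * u₁ x ^ 2 + γ * u₂ x ^ 2 - 1) * deriv u₁ x
        + 2 * γ * u₁ x * u₂ x * deriv u₂ x) * w₁ x|
        ≤ (((3 + γ) * (1 + M) + 1) * M
            + 2 * γ * Real.sqrt (1+M) * Real.sqrt (1+M) * M) * (M * Real.exp (-δ * |x|)) :=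
      mb _ _ _ _ ((abs_add_le _ _).trans (add_le_add
        (mb _ _ _ _ (bK3 x) (b1M x))
        (mb _ _ _ _ (mb _ _ _ _ (mb _ _ _ _ h2γa (hB1 x)) (hB2 x)) (b2M x)))) (b3 x)
    have e5 : |((γ * u₁ x ^ 2 + 3 * u₂ x ^ 2 - 1) * deriv u₂ x
        + 2 * γ * u₁ x * u₂ x * deriv u₁ x) * w₂ x|
        ≤ (((3 + γ) * (1 + M) + 1) * M
            + 2 * γ * Real.sqrt (1+M) * Real.sqrt (1+M) * M) * (M * Real.exp (-δ * |x|)) :=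
      mb _ _ _ _ ((abs_add_le _ _).trans (add_le_add
        (mb _ _ _ _ (bK4 x) (b2M x))
        (mb _ _ _ _ (mb _ _ _ _ (mb _ _ _ _ h2γa (hB1 x)) (hB2 x)) (b1M x)))) (b4 x)
    calc |(1/2) * (V x * (2 * u₁ x * deriv u₁ x + 2 * u₂ x * deriv u₂ x)
          - deriv V x * (u₁ x ^ 2 + u₂ x ^ 2 - 1))
        - (u₁ x ^ 2 + γ * u₂ x ^ 2 - 1) * u₁ x * deriv w₁ x
        - (γ * u₁ x ^ 2 + u₂ x ^ 2 - 1) * u₂ x * deriv w₂ x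
        + ((3 * u₁ x ^ 2 + γ * u₂ x ^ 2 - 1) * deriv u₁ x
            + 2 * γ * u₁ x * u₂ x * deriv u₂ x) * w₁ x
        + ((γ * u₁ x ^ 2 + 3 * u₂ x ^ 2 - 1) * deriv u₂ x
            + 2 * γ * u₁ x * u₂ x * deriv u₁ x) * w₂ x|
        ≤ |(1/2) * (V x * (2 * u₁ x * deriv u₁ x + 2 * u₂ x * deriv u₂ x)
            - deriv V x * (u₁ x ^ 2 + u₂ x ^ 2 - 1))|
          + |(u₁ x ^ 2 + γ * u₂ x ^ 2 - 1) * u₁ x * deriv w₁ x|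
          + |(γ * u₁ x ^ 2 + u₂ x ^ 2 - 1) * u₂ x * deriv w₂ x|
          + |((3 * u₁ x ^ 2 + γ * u₂ x ^ 2 - 1) * deriv u₁ x
              + 2 * γ * u₁ x * u₂ x * deriv u₂ x) * w₁ x|
          + |((γ * u₁ x ^ 2 + 3 * u₂ x ^ 2 - 1) * deriv u₂ x
              + 2 * γ * u₁ x * u₂ x * deriv u₁ x) * w₂ x| := tri _ _ _ _ _
      _ ≤ (1/2) * (MV * ((2 * Real.sqrt (1+M)) * (M * Real.exp (-δ * |x|))
              + (2 * Real.sqrt (1+M)) * (M * Real.exp (-δ * |x|)))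
            + MV * (M * Real.exp (-δ * |x|)))
          + ((3 + γ) * (1 + M) + 1) * Real.sqrt (1+M) * (M * Real.exp (-δ * |x|))
          + ((3 + γ) * (1 + M) + 1) * Real.sqrt (1+M) * (M * Real.exp (-δ * |x|))
          + (((3 + γ) * (1 + M) + 1) * M
              + 2 * γ * Real.sqrt (1+M) * Real.sqrt (1+M) * M) * (M * Real.exp (-δ * |x|))
          + (((3 + γ) * (1 + M) + 1) * M
              + 2 * γ * Real.sqrt (1+M) * Real.sqrt (1+M) * M) * (M * Real.exp (-δ * |x|)) :=
        add_le_add (add_le_add (add_le_add (add_le_add e1 e2) e3) e4) e5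
      _ = ((1/2) * (MV * (2 * Real.sqrt (1+M) * M + 2 * Real.sqrt (1+M) * M) + MV * M)
          + ((3 + γ) * (1 + M) + 1) * Real.sqrt (1+M) * M
          + ((3 + γ) * (1 + M) + 1) * Real.sqrt (1+M) * M
          + (((3 + γ) * (1 + M) + 1) * M + 2 * γ * Real.sqrt (1+M) * Real.sqrt (1+M) * M) * M
          + (((3 + γ) * (1 + M) + 1) * M + 2 * γ * Real.sqrt (1+M) * Real.sqrt (1+M) * M) * M)
          * Real.exp (-δ * |x|) := by ring
  -- derivative identity
  have hder : ∀ x : ℝ, HasDerivAt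
      (fun y : ℝ =>
        (1/2) * (V y * (2 * u₁ y * deriv u₁ y + 2 * u₂ y * deriv u₂ y)
          - deriv V y * (u₁ y ^ 2 + u₂ y ^ 2 - 1))
        - (u₁ y ^ 2 + γ * u₂ y ^ 2 - 1) * u₁ y * deriv w₁ y
        - (γ * u₁ y ^ 2 + u₂ y ^ 2 - 1) * u₂ y * deriv w₂ y
        + ((3 * u₁ y ^ 2 + γ * u₂ y ^ 2 - 1) * deriv u₁ y
            + 2 * γ * u₁ y * u₂ y * deriv u₂ y) * w₁ y
        + ((γ * u₁ y ^ 2 + 3 * u₂ y ^ 2 - 1) * deriv u₂ y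
            + 2 * γ * u₁ y * u₂ y * deriv u₁ y) * w₂ y)
      (V x * ((deriv u₁ x)^2 + (deriv u₂ x)^2)
        + 6 * u₁ x * w₁ x * (deriv u₁ x)^2
        + 6 * u₂ x * w₂ x * (deriv u₂ x)^2
        + 2 * γ * u₂ x * w₂ x * (deriv u₁ x)^2
        + 2 * γ * u₁ x * w₁ x * (deriv u₂ x)^2
        + 4 * γ * (u₁ x * w₂ x + u₂ x * w₁ x) * deriv u₁ x * deriv u₂ x
        - (1/2) * (deriv (deriv V) x * (u₁ x ^ 2 + u₂ x ^ 2 - 1))) x := fun x =>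
    hasDerivAt_Hmel γ u₁ u₂ w₁ w₂ V (deriv u₁) (deriv u₂) (deriv w₁) (deriv w₂) (deriv V)
      (deriv (deriv V) x) x ((d_u₁ x).hasDerivAt) (Du₁ x) ((d_u₂ x).hasDerivAt) (Du₂ x)
      ((d_w₁ x).hasDerivAt) (Dw₁ x) ((d_w₂ x).hasDerivAt) (Dw₂ x)
      ((d_V x).hasDerivAt) ((d_dV x).hasDerivAt)
  have hsub : Integrable (fun x : ℝ =>
      V x * ((deriv u₁ x)^2 + (deriv u₂ x)^2)
        + 6 * u₁ x * w₁ x * (deriv u₁ x)^2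
        + 6 * u₂ x * w₂ x * (deriv u₂ x)^2
        + 2 * γ * u₂ x * w₂ x * (deriv u₁ x)^2
        + 2 * γ * u₁ x * w₁ x * (deriv u₂ x)^2
        + 4 * γ * (u₁ x * w₂ x + u₂ x * w₁ x) * deriv u₁ x * deriv u₂ x
        - (1/2) * (deriv (deriv V) x * (u₁ x ^ 2 + u₂ x ^ 2 - 1))) :=
    isig.sub (i7.const_mul (1/2))
  have hzero : ∫ x : ℝ,
      (V x * ((deriv u₁ x)^2 + (deriv u₂ x)^2)
        + 6 * u₁ x * w₁ x * (deriv u₁ x)^2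
        + 6 * u₂ x * w₂ x * (deriv u₂ x)^2
        + 2 * γ * u₂ x * w₂ x * (deriv u₁ x)^2
        + 2 * γ * u₁ x * w₁ x * (deriv u₂ x)^2
        + 4 * γ * (u₁ x * w₂ x + u₂ x * w₁ x) * deriv u₁ x * deriv u₂ x
        - (1/2) * (deriv (deriv V) x * (u₁ x ^ 2 + u₂ x ^ 2 - 1))) = 0 :=
    integral_eq_zero_of_hasDerivAt_of_integrable hder hsub iH
  rw [integral_sub isig (i7.const_mul (1/2)), sub_eq_zero] at hzero
  rw [hzero, integral_const_mul]
end
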